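/- For any ideal I of 𝔥_{M,∗} and z ∈ M, the modified addition formula S_z(x+y) = S_z(x) ∗ C_z(y) + C_z(x) ∗ S_z(y) holds in (𝔥_{M,∗}/I)⟦x,y⟧ if and only if the modified Pythagorean identity −w_{z,1} ∗ S_z(x)^{∗2} + C_z(x)^{∗2} = 1 holds in (𝔥_{M,∗}/I)⟦x⟧. -/

import Mathlib

open scoped BigOperators

/-- `𝔥_M`: the noncommutative polynomial ring `ℚ⟨e_z : z ∈ M⟩`, realized as the
monoid algebra of the free monoid on `M` over `ℚ` (concatenation product). -/
abbrev H (M : Type*) [MonoidWithZero M] : Type _ := MonoidAlgebra ℚ (FreeMonoid M)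

variable {M : Type*} [MonoidWithZero M]

/-- The word `e_{a_1} ⋯ e_{a_k}` as an element of `𝔥_M`. -/
noncomputable def wrd (l : List M) : H M := MonoidAlgebra.single (FreeMonoid.ofList l) 1

/-- The generator `e_z`. -/
noncomputable def e (z : M) : H M := wrd [z]

/-- The harmonic product on words, defined by the recursion
`e_a w ∗ e_b w' = e_{ab}(w ∗ e_b w' + e_a w ∗ w' − e_0 (w ∗ w'))`. -/
noncomputable def har : List M → List M → H M
  | [], w => wrd w
  | a :: w, [] => wrd (a :: w)
  | a :: w, b :: w' =>
      wrd [a * b] * (har w (b :: w') + har (a :: w) w' - wrd [0] * har w w')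
termination_by w w' => w.length + w'.length
decreasing_by all_goals (simp; try omega)

/-- The harmonic product `∗` on `𝔥_M`, extended ℚ-bilinearly from words. -/
noncomputable def hmul (f g : H M) : H M :=
  Finsupp.sum f.coeff fun w a => Finsupp.sum g.coeff fun w' b =>
    (a * b) • har (FreeMonoid.toList w) (FreeMonoid.toList w')

/-- Powers with respect to the harmonic product. -/
noncomputable def hpow (a : H M) : ℕ → H M
  | 0 => 1
  | n + 1 => hmul a (hpow a n)

/-- `s_{z,k} = e_z e_0^{k-1}` (concatenation product). -/
noncomputable def s (z : M) (k : ℕ) : H M := e z * (e 0) ^ (k - 1)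

/-- `sprod z k n = s_{z^n,k} s_{z^{n-1},k} ⋯ s_{z,k}` (concatenation), `sprod z k 0 = 1`. -/
noncomputable def sprod (z : M) (k : ℕ) : ℕ → H M
  | 0 => 1
  | n + 1 => s (z ^ (n + 1)) k * sprod z k n

/-- Cauchy product of power series over `(𝔥_M, ∗)`, represented as coefficient sequences. -/
noncomputable def hmulPS (f g : ℕ → H M) : ℕ → H M :=
  fun n => ∑ i ∈ Finset.range (n + 1), hmul (f i) (g (n - i))

/-- Powers of a power series w.r.t. the harmonic product. -/
noncomputable def psPow (f : ℕ → H M) : ℕ → (ℕ → H M)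
  | 0 => fun n => if n = 0 then 1 else 0
  | m + 1 => hmulPS f (psPow f m)

/-- `exp_∗` of a power series with zero constant term (coefficientwise). -/
noncomputable def expPS (f : ℕ → H M) : ℕ → H M :=
  fun n => ∑ m ∈ Finset.range (n + 1), ((Nat.factorial m : ℚ))⁻¹ • psPow f m n

/-- Coefficients of the formal sine `S_z(x) = Σ_{n≥0} s_{z^n,2}⋯s_{z,2} x^{2n+1}`. -/
noncomputable def Scoef (z : M) (d : ℕ) : H M :=
  if d % 2 = 1 then sprod z 2 (d / 2) else 0

/-- Coefficients of the formal cosine `C_z(x) = S_z'(x)`. -/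
noncomputable def Ccoef (z : M) (d : ℕ) : H M := ((d : ℚ) + 1) • Scoef z (d + 1)

/-- `w_{z,n} = (2n+1)! s_{z^n,2} ⋯ s_{z,2}`. -/
noncomputable def wz (z : M) (n : ℕ) : H M := ((Nat.factorial (2 * n + 1) : ℚ)) • sprod z 2 n

/-- `g_{z,m,n} = w_{z,m+n} − w_{z,m} ∗ w_{z,n}`. -/
noncomputable def gz (z : M) (m n : ℕ) : H M := wz z (m + n) - hmul (wz z m) (wz z n)

/-- Coefficient of `x^i y^j` in `A_z(x,y) = S_z(x+y) − S_z(x) ∗ C_z(y) − C_z(x) ∗ S_z(y)`. -/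
noncomputable def Acoef (z : M) (i j : ℕ) : H M :=
  (Nat.choose (i + j) i : ℚ) • Scoef z (i + j)
    - hmul (Scoef z i) (Ccoef z j) - hmul (Ccoef z i) (Scoef z j)

/-- Coefficient of `x^d` in `P_z(x) = −w_{z,1} ∗ S_z(x)^{∗2} + C_z(x)^{∗2}`. -/
noncomputable def Pcoef (z : M) (d : ℕ) : H M :=
  -(hmul (wz z 1) (hmulPS (Scoef z) (Scoef z) d)) + hmulPS (Ccoef z) (Ccoef z) d


/-- Coefficients of `S^T_{z,k}(x) = Σ_{n≥0} s_{z^n,k}⋯s_{z,k} x^{(n+1)k−1}`. -/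
noncomputable def STcoef (z : M) (k : ℕ) (d : ℕ) : H M :=
  if k ∣ (d + 1) then sprod z k ((d + 1) / k - 1) else 0

/-- Coefficients of the series `Σ_{n≥1} (s_{z^n,nk}/n) x^{nk}`. -/
noncomputable def gexp (z : M) (k : ℕ) (d : ℕ) : H M :=
  if d ≠ 0 ∧ k ∣ d then (((d / k : ℕ) : ℚ))⁻¹ • s (z ^ (d / k)) d else 0

/-- Coefficients of `S^R_{z,k}(x) = x^{k−1} exp_∗(Σ_{n≥1} (s_{z^n,nk}/n) x^{nk})`. -/
noncomputable def SRcoef (z : M) (k : ℕ) (d : ℕ) : H M :=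
  if k - 1 ≤ d then expPS (gexp z k) (d - (k - 1)) else 0

/-- Admissible words spanning `𝔥^0_M = ℚ ⊕ ⨁_{a≠0,1} 𝔥_M e_a ⊕ ⨁_{a≠0,b≠1} e_a 𝔥_M e_b`. -/
def adm0 (l : List M) : Prop :=
  l = [] ∨ ∃ h : l ≠ [],
    (l.getLast h ≠ 0 ∧ l.getLast h ≠ 1) ∨ (l.head h ≠ 0 ∧ l.getLast h ≠ 1)

/-- The subspace `𝔥^0_M`. -/
noncomputable def H0 (M : Type*) [MonoidWithZero M] : Submodule ℚ (H M) :=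
  Submodule.span ℚ {x | ∃ l : List M, adm0 l ∧ x = wrd l}

/-- Words spanning `𝔥^1_M = ⨁_{m≥0} 𝔥^0_M e_1^m`. -/
def adm1 (l : List M) : Prop :=
  ∃ (l₀ : List M) (m : ℕ), adm0 l₀ ∧ l = l₀ ++ List.replicate m 1

/-- The subspace `𝔥^1_M`. -/
noncomputable def H1 (M : Type*) [MonoidWithZero M] : Submodule ℚ (H M) :=
  Submodule.span ℚ {x | ∃ l : List M, adm1 l ∧ x = wrd l}

/-- `ℓ(w)`: the number of letters `e_a` of a word with `a ≠ 0`. -/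
noncomputable def lcount (l : List M) : ℕ :=
  l.countP fun a => @decide (a ≠ 0) (Classical.propDecidable _)

/-- `ℱ_d 𝔥^0_M`: span of admissible words `w` with `ℓ(w) ≤ d`. -/
noncomputable def F0 (M : Type*) [MonoidWithZero M] (d : ℕ) : Submodule ℚ (H M) :=
  Submodule.span ℚ {x | ∃ l : List M, adm0 l ∧ lcount l ≤ d ∧ x = wrd l}

/-- The ideal of `(𝔥_M, ∗)` generated by a set. -/
noncomputable def genIdeal (S : Set (H M)) : Submodule ℚ (H M) :=
  Submodule.span ℚ {x | ∃ a y, y ∈ S ∧ x = hmul a y}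

/-- The product on the polynomial ring `𝔥_{M,∗}[S,T]` (represented as
finitely supported coefficient families indexed by monomials `S^i T^j`). -/
noncomputable def polyMul2 (f g : (ℕ × ℕ) →₀ H M) : (ℕ × ℕ) →₀ H M :=
  Finsupp.sum f fun p a => Finsupp.sum g fun q b => Finsupp.single (p + q) (hmul a b)

/-- `φ : 𝔥^0_{M,∗}[S,T] → 𝔥_{M,∗}`, `Σ w_{ij} S^i T^j ↦ Σ w_{ij} ∗ e_0^{∗i} ∗ e_1^{∗j}`. -/
noncomputable def phi2 (f : (ℕ × ℕ) →₀ H M) : H M :=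
  Finsupp.sum f fun p a => hmul a (hmul (hpow (e 0) p.1) (hpow (e 1) p.2))

/-- The product on `𝔥_{M,∗}[S]`. -/
noncomputable def polyMul1 (f g : ℕ →₀ H M) : ℕ →₀ H M :=
  Finsupp.sum f fun p a => Finsupp.sum g fun q b => Finsupp.single (p + q) (hmul a b)

/-- `φ₁ : 𝔥^1_{M,∗}[S] → 𝔥_{M,∗}`, `Σ w_i S^i ↦ Σ w_i ∗ e_0^{∗i}`. -/
noncomputable def phi1 (f : ℕ →₀ H M) : H M :=
  Finsupp.sum f fun i a => hmul a (hpow (e 0) i)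


section Lemmas
variable {M : Type*} [MonoidWithZero M]

lemma har_nil_left (w : List M) : har ([] : List M) w = wrd w := by simp [har]

lemma har_nil_right (w : List M) : har w ([] : List M) = wrd w := by
  cases w with
  | nil => simp [har]
  | cons a w => simp [har]

lemma har_cons_cons (a b : M) (w w' : List M) :
    har (a :: w) (b :: w') =
      wrd [a * b] * (har w (b :: w') + har (a :: w) w' - wrd [0] * har w w') := by
  rw [har]

lemma hmul_zero_left (g : H M) : hmul (0 : H M) g = 0 := by simp [hmul]

lemma hmul_zero_right (f : H M) : hmul f (0 : H M) = 0 := by simp [hmul]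

lemma hmul_add_left (f₁ f₂ g : H M) : hmul (f₁ + f₂) g = hmul f₁ g + hmul f₂ g := by
  unfold hmul
  rw [MonoidAlgebra.coeff_add]
  apply Finsupp.sum_add_index' <;> intro w
  · simp
  · intro a₁ a₂
    rw [← Finsupp.sum_add]
    apply Finsupp.sum_congr
    intro w' _
    rw [add_mul, add_smul]

lemma hmul_add_right (f g₁ g₂ : H M) : hmul f (g₁ + g₂) = hmul f g₁ + hmul f g₂ := by
  unfold hmul
  rw [← Finsupp.sum_add]
  apply Finsupp.sum_congr
  intro w _
  rw [MonoidAlgebra.coeff_add]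
  apply Finsupp.sum_add_index' <;> intro w'
  · simp
  · intro b₁ b₂
    rw [mul_add, add_smul]

lemma hmul_smul_left (r : ℚ) (f g : H M) : hmul (r • f) g = r • hmul f g := by
  unfold hmul
  rw [MonoidAlgebra.coeff_smul, Finsupp.sum_smul_index']
  · rw [Finsupp.smul_sum]
    apply Finsupp.sum_congr
    intro w _
    rw [Finsupp.smul_sum]
    apply Finsupp.sum_congr
    intro w' _
    rw [smul_eq_mul, mul_assoc, mul_smul]
  · intro w; simp

lemma hmul_smul_right (r : ℚ) (f g : H M) : hmul f (r • g) = r • hmul f g := by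
  unfold hmul
  rw [Finsupp.smul_sum]
  apply Finsupp.sum_congr
  intro w _
  rw [MonoidAlgebra.coeff_smul, Finsupp.sum_smul_index']
  · rw [Finsupp.smul_sum]
    apply Finsupp.sum_congr
    intro w' _
    rw [smul_eq_mul, mul_left_comm, mul_smul]
  · intro w'; simp

lemma hmul_wrd (l l' : List M) : hmul (wrd l) (wrd l') = har l l' := by
  unfold hmul wrd
  simp only [MonoidAlgebra.coeff_single]
  rw [Finsupp.sum_single_index, Finsupp.sum_single_index] <;> simp

lemma hmul_sub_left (f₁ f₂ g : H M) : hmul (f₁ - f₂) g = hmul f₁ g - hmul f₂ g := by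
  have := hmul_add_left (f₁ - f₂) f₂ g
  rw [sub_add_cancel] at this
  rw [this]; abel

lemma hmul_sub_right (f g₁ g₂ : H M) : hmul f (g₁ - g₂) = hmul f g₁ - hmul f g₂ := by
  have := hmul_add_right f (g₁ - g₂) g₂
  rw [sub_add_cancel] at this
  rw [this]; abel

lemma hmul_neg_left (f g : H M) : hmul (-f) g = - hmul f g := by
  have := hmul_sub_left 0 f g; simpa [hmul_zero_left] using this

lemma hmul_neg_right (f g : H M) : hmul f (-g) = - hmul f g := by
  have := hmul_sub_right f 0 g; simpa [hmul_zero_right] using this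

lemma wrd_nil : wrd ([] : List M) = 1 := rfl

lemma hmul_one_left (f : H M) : hmul 1 f = f := by
  show hmul (wrd []) f = f
  unfold hmul wrd
  simp only [MonoidAlgebra.coeff_single]
  rw [Finsupp.sum_single_index (by simp)]
  have h : ∀ w' ∈ f.coeff.support, ∀ b : ℚ,
      ((1:ℚ) * b) • har (FreeMonoid.toList (FreeMonoid.ofList ([]:List M))) (FreeMonoid.toList w')
        = MonoidAlgebra.single w' b := by
    intro w' _ b
    rw [one_mul, FreeMonoid.toList_ofList, har_nil_left]
    unfold wrd
    rw [FreeMonoid.ofList_toList, MonoidAlgebra.smul_single, smul_eq_mul, mul_one]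
  rw [Finsupp.sum_congr (g2 := fun w b => MonoidAlgebra.single w b) (fun w hw => h w hw (f.coeff w))]
  exact MonoidAlgebra.sum_coeff_single f

lemma hmul_one_right (f : H M) : hmul f 1 = f := by
  show hmul f (wrd []) = f
  unfold hmul wrd
  simp only [MonoidAlgebra.coeff_single]
  have h : ∀ w ∈ f.coeff.support, ∀ a : ℚ,
      (Finsupp.sum (Finsupp.single (FreeMonoid.ofList ([]:List M)) (1:ℚ)) fun w' b =>
        (a * b) • har (FreeMonoid.toList w) (FreeMonoid.toList w')) = MonoidAlgebra.single w a := by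
    intro w _ a
    rw [Finsupp.sum_single_index (by simp)]
    rw [mul_one, FreeMonoid.toList_ofList, har_nil_right]
    unfold wrd
    rw [FreeMonoid.ofList_toList, MonoidAlgebra.smul_single, smul_eq_mul, mul_one]
  rw [Finsupp.sum_congr (g2 := fun w b => MonoidAlgebra.single w b) (fun w hw => h w hw (f.coeff w))]
  exact MonoidAlgebra.sum_coeff_single f

lemma wrd_append (l l' : List M) : wrd (l ++ l') = wrd l * wrd l' := by
  unfold wrd
  rw [MonoidAlgebra.single_mul_single, one_mul]
  rfl

end Lemmas

section Lemmas2
variable {M : Type*} [MonoidWithZero M]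

lemma single_eq_smul_wrd (w : FreeMonoid M) (b : ℚ) :
    (MonoidAlgebra.single w b : H M) = b • wrd (FreeMonoid.toList w) := by
  unfold wrd
  rw [FreeMonoid.ofList_toList, MonoidAlgebra.smul_single, smul_eq_mul, mul_one]

lemma H_induction {p : H M → Prop} (h0 : p 0) (hadd : ∀ f g, p f → p g → p (f + g))
    (hs : ∀ (l : List M) (b : ℚ), p (b • wrd l)) (f : H M) : p f := by
  induction f using MonoidAlgebra.induction_linear with
  | zero => exact h0
  | add f g hf hg => exact hadd f g hf hg
  | single w b => rw [single_eq_smul_wrd]; exact hs _ b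

lemma wrd_cons (x : M) (l : List M) : wrd (x :: l) = wrd [x] * wrd l := by
  rw [← wrd_append, List.singleton_append]

lemma hmul_consL (x c : M) (f g : H M) :
    hmul (wrd [x] * f) (wrd [c] * g) =
      wrd [x*c] * (hmul f (wrd [c] * g) + hmul (wrd [x] * f) g - wrd [0] * hmul f g) := by
  induction f using H_induction with
  | h0 => simp [hmul_zero_left, hmul_zero_right]
  | hadd f1 f2 ih1 ih2 =>
    rw [mul_add, hmul_add_left, ih1, ih2]
    simp only [hmul_add_left, hmul_add_right, mul_add, mul_sub]
    abel
  | hs l b =>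
    induction g using H_induction with
    | h0 => simp [hmul_zero_left, hmul_zero_right]
    | hadd g1 g2 ih1 ih2 =>
      rw [mul_add, hmul_add_right, ih1, ih2]
      simp only [hmul_add_left, hmul_add_right, mul_add, mul_sub]
      abel
    | hs l' b' =>
      simp only [mul_smul_comm, hmul_smul_left, hmul_smul_right, smul_smul,
        smul_add, smul_sub]
      rw [← wrd_cons x l, ← wrd_cons c l', hmul_wrd, hmul_wrd, hmul_wrd, hmul_wrd,
        har_cons_cons]
      simp only [mul_add, mul_sub, mul_smul_comm, smul_add, smul_sub]

end Lemmas2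

section Lemmas3
variable {M : Type*} [MonoidWithZero M]

lemma hmul_consL' (x c : M) (f : H M) (w : List M) :
    hmul (wrd [x] * f) (wrd (c :: w)) =
      wrd [x*c] * (hmul f (wrd (c :: w)) + hmul (wrd [x] * f) (wrd w)
        - wrd [0] * hmul f (wrd w)) := by
  rw [wrd_cons c w, hmul_consL, ← wrd_cons]

lemma hmul_consR (a y : M) (u : List M) (g : H M) :
    hmul (wrd (a :: u)) (wrd [y] * g) =
      wrd [a*y] * (hmul (wrd u) (wrd [y] * g) + hmul (wrd (a :: u)) g
        - wrd [0] * hmul (wrd u) g) := by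
  rw [wrd_cons a u, hmul_consL, ← wrd_cons]

lemma har_assoc_aux : ∀ n : ℕ, ∀ l₁ l₂ l₃ : List M,
    l₁.length + l₂.length + l₃.length = n →
    hmul (har l₁ l₂) (wrd l₃) = hmul (wrd l₁) (har l₂ l₃) := by
  intro n
  induction n using Nat.strong_induction_on with
  | _ n IH =>
  have ih : ∀ l₁ l₂ l₃ : List M, l₁.length + l₂.length + l₃.length < n →
      hmul (har l₁ l₂) (wrd l₃) = hmul (wrd l₁) (har l₂ l₃) :=
    fun a b c h => IH _ h a b c rfl
  rintro (_ | ⟨a, u⟩) l₂ l₃ hn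
  · rw [har_nil_left, hmul_wrd, wrd_nil, hmul_one_left]
  rcases l₂ with _ | ⟨b, v⟩
  · rw [har_nil_right, har_nil_left, hmul_wrd]
  rcases l₃ with _ | ⟨c, w⟩
  · rw [wrd_nil, hmul_one_right, har_nil_right, hmul_wrd]
  -- main case
  have hlen : ∀ p q r : ℕ, p + q + r < u.length + 1 + (v.length + 1) + (w.length + 1) →
      p + q + r < n := by
    intro p q r h; simp only [List.length_cons] at hn; omega
  rw [har_cons_cons a b u v, hmul_consL' (a*b) c _ w, ← har_cons_cons a b u v]
  simp only [hmul_add_left, hmul_sub_left]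
  rw [hmul_consL' 0 c (har u v) w, zero_mul]
  rw [ih u (b::v) (c::w) (by apply hlen; (try simp only [List.length_cons]); omega),
      ih (a::u) v (c::w) (by apply hlen; (try simp only [List.length_cons]); omega),
      ih u v (c::w) (by apply hlen; (try simp only [List.length_cons]); omega),
      ih (a::u) (b::v) w (by apply hlen; (try simp only [List.length_cons]); omega),
      ih u (b::v) w (by apply hlen; (try simp only [List.length_cons]); omega),
      ih (a::u) v w (by apply hlen; (try simp only [List.length_cons]); omega),
      ih u v w (by apply hlen; (try simp only [List.length_cons]); omega)]
  -- RHS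
  rw [har_cons_cons b c v w, hmul_consR a (b*c) u _, ← har_cons_cons b c v w]
  simp only [hmul_add_right, hmul_sub_right]
  rw [hmul_consR a 0 u (har v w), mul_zero]
  rw [← mul_assoc a b c]
  simp only [mul_add, mul_sub]
  abel

end Lemmas3

section Lemmas4
variable {M : Type*} [MonoidWithZero M]

lemma hmul_assoc (f g h : H M) : hmul (hmul f g) h = hmul f (hmul g h) := by
  induction f using H_induction with
  | h0 => simp [hmul_zero_left]
  | hadd f1 f2 ih1 ih2 => simp only [hmul_add_left, ih1, ih2]
  | hs l b =>
    induction g using H_induction with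
    | h0 => simp [hmul_zero_left, hmul_zero_right]
    | hadd g1 g2 ih1 ih2 => simp only [hmul_add_left, hmul_add_right, ih1, ih2]
    | hs l' b' =>
      induction h using H_induction with
      | h0 => simp [hmul_zero_right]
      | hadd h1 h2 ih1 ih2 => simp only [hmul_add_right, ih1, ih2]
      | hs l'' b'' =>
        simp only [hmul_smul_left, hmul_smul_right, hmul_wrd]
        rw [har_assoc_aux (l.length + l'.length + l''.length) l l' l'' rfl]

lemma har_comm_aux : ∀ n : ℕ, ∀ l l' : List M, l.length + l'.length = n →
    (∀ x ∈ l, ∀ y ∈ l', x * y = y * x) → har l l' = har l' l := by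
  intro n
  induction n using Nat.strong_induction_on with
  | _ n IH =>
  rintro (_ | ⟨a, u⟩) l' hn hc
  · rw [har_nil_left, har_nil_right]
  rcases l' with _ | ⟨b, v⟩
  · rw [har_nil_left, har_nil_right]
  have hab : a * b = b * a := hc a (by simp) b (by simp)
  rw [har_cons_cons a b u v, har_cons_cons b a v u, hab]
  congr 1
  have h1 : har u (b :: v) = har (b :: v) u := by
    apply IH (u.length + (b::v).length) (by simp at hn ⊢; omega) _ _ rfl
    intro x hx y hy; exact hc x (by simp [hx]) y hy
  have h2 : har (a :: u) v = har v (a :: u) := by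
    apply IH ((a::u).length + v.length) (by simp at hn ⊢; omega) _ _ rfl
    intro x hx y hy; exact hc x hx y (by simp [hy])
  have h3 : har u v = har v u := by
    apply IH (u.length + v.length) (by simp at hn ⊢; omega) _ _ rfl
    intro x hx y hy; exact hc x (by simp [hx]) y (by simp [hy])
  rw [h1, h2, h3]
  abel

end Lemmas4

section Lemmas5
variable {M : Type*} [MonoidWithZero M]

/-- Span of words with letters in `S`. -/
noncomputable def Wspan (S : Set M) : Submodule ℚ (H M) :=
  Submodule.span ℚ {x | ∃ l : List M, (∀ a ∈ l, a ∈ S) ∧ x = wrd l}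

lemma wrd_mem_Wspan {S : Set M} {l : List M} (h : ∀ a ∈ l, a ∈ S) :
    wrd l ∈ Wspan S :=
  Submodule.subset_span ⟨l, h, rfl⟩

lemma one_mem_Wspan (S : Set M) : (1 : H M) ∈ Wspan S := by
  rw [← wrd_nil]; exact wrd_mem_Wspan (by simp)

lemma wmul_mem_Wspan {S : Set M} {x : M} (hx : x ∈ S) {f : H M} (hf : f ∈ Wspan S) :
    wrd [x] * f ∈ Wspan S := by
  induction hf using Submodule.span_induction with
  | mem y hy =>
    obtain ⟨l, hl, rfl⟩ := hy
    rw [← wrd_cons]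
    refine wrd_mem_Wspan ?_
    intro a ha
    rcases List.mem_cons.mp ha with rfl | h'
    · exact hx
    · exact hl a h'
  | zero => rw [mul_zero]; exact zero_mem _
  | add f g hf hg ihf ihg => rw [mul_add]; exact add_mem ihf ihg
  | smul r f hf ihf => rw [mul_smul_comm]; exact Submodule.smul_mem _ r ihf

lemma har_mem_Wspan {S : Set M} (h0 : (0 : M) ∈ S)
    (hcl : ∀ a ∈ S, ∀ b ∈ S, a * b ∈ S) :
    ∀ n : ℕ, ∀ l l' : List M, l.length + l'.length = n →
    (∀ a ∈ l, a ∈ S) → (∀ a ∈ l', a ∈ S) → har l l' ∈ Wspan S := by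
  intro n
  induction n using Nat.strong_induction_on with
  | _ n IH =>
  rintro (_ | ⟨a, u⟩) l' hn hl hl'
  · rw [har_nil_left]; exact wrd_mem_Wspan hl'
  rcases l' with _ | ⟨b, v⟩
  · rw [har_nil_right]; exact wrd_mem_Wspan hl
  rw [har_cons_cons a b u v]
  have ha : a ∈ S := hl a (by simp)
  have hb : b ∈ S := hl' b (by simp)
  have hu : ∀ x ∈ u, x ∈ S := fun x hx => hl x (by simp [hx])
  have hv : ∀ x ∈ v, x ∈ S := fun x hx => hl' x (by simp [hx])
  apply wmul_mem_Wspan (hcl a ha b hb)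
  refine sub_mem (add_mem ?_ ?_) (wmul_mem_Wspan h0 ?_)
  · exact IH (u.length + (b::v).length) (by simp at hn ⊢; omega) _ _ rfl hu hl'
  · exact IH ((a::u).length + v.length) (by simp at hn ⊢; omega) _ _ rfl hl hv
  · exact IH (u.length + v.length) (by simp at hn ⊢; omega) _ _ rfl hu hv

lemma hmul_mem_Wspan {S : Set M} (h0 : (0 : M) ∈ S)
    (hcl : ∀ a ∈ S, ∀ b ∈ S, a * b ∈ S) {f g : H M}
    (hf : f ∈ Wspan S) (hg : g ∈ Wspan S) : hmul f g ∈ Wspan S := by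
  induction hf using Submodule.span_induction with
  | mem y hy =>
    obtain ⟨l, hl, rfl⟩ := hy
    induction hg using Submodule.span_induction with
    | mem y' hy' =>
      obtain ⟨l', hl', rfl⟩ := hy'
      rw [hmul_wrd]
      exact har_mem_Wspan h0 hcl _ l l' rfl hl hl'
    | zero => rw [hmul_zero_right]; exact zero_mem _
    | add f' g' hf' hg' ihf ihg => rw [hmul_add_right]; exact add_mem ihf ihg
    | smul r f' hf' ihf => rw [hmul_smul_right]; exact Submodule.smul_mem _ r ihf
  | zero => rw [hmul_zero_left]; exact zero_mem _
  | add f' g' hf' hg' ihf ihg => rw [hmul_add_left]; exact add_mem ihf ihg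
  | smul r f' hf' ihf => rw [hmul_smul_left]; exact Submodule.smul_mem _ r ihf

lemma hmul_comm_Wspan {S : Set M} (hcomm : ∀ a ∈ S, ∀ b ∈ S, a * b = b * a)
    {f g : H M} (hf : f ∈ Wspan S) (hg : g ∈ Wspan S) : hmul f g = hmul g f := by
  induction hf using Submodule.span_induction with
  | mem y hy =>
    obtain ⟨l, hl, rfl⟩ := hy
    induction hg using Submodule.span_induction with
    | mem y' hy' =>
      obtain ⟨l', hl', rfl⟩ := hy'
      rw [hmul_wrd, hmul_wrd]
      exact har_comm_aux _ l l' rfl (fun x hx y hy => hcomm x (hl x hx) y (hl' y hy))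
    | zero => rw [hmul_zero_right, hmul_zero_left]
    | add f' g' hf' hg' ihf ihg => rw [hmul_add_right, hmul_add_left, ihf, ihg]
    | smul r f' hf' ihf => rw [hmul_smul_right, hmul_smul_left, ihf]
  | zero => rw [hmul_zero_left, hmul_zero_right]
  | add f' g' hf' hg' ihf ihg => rw [hmul_add_left, hmul_add_right, ihf, ihg]
  | smul r f' hf' ihf => rw [hmul_smul_left, hmul_smul_right, ihf]

lemma hmul_exchange {S : Set M} (hcomm : ∀ a ∈ S, ∀ b ∈ S, a * b = b * a)
    {f g : H M} (hf : f ∈ Wspan S) (hg : g ∈ Wspan S) (h : H M) :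
    hmul f (hmul g h) = hmul g (hmul f h) := by
  rw [← hmul_assoc, hmul_comm_Wspan hcomm hf hg, hmul_assoc]

end Lemmas5

section Lemmas6
variable {M : Type*} [MonoidWithZero M]

/-- Powers of `z` together with `0`. -/
def ZS (z : M) : Set M := {x | (∃ k : ℕ, x = z ^ k) ∨ x = 0}

lemma ZS_zero (z : M) : (0 : M) ∈ ZS z := Or.inr rfl

lemma ZS_mul (z : M) : ∀ a ∈ ZS z, ∀ b ∈ ZS z, a * b ∈ ZS z := by
  rintro a (⟨i, rfl⟩ | rfl) b (⟨j, rfl⟩ | rfl)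
  · exact Or.inl ⟨i + j, (pow_add z i j).symm⟩
  · exact Or.inr (mul_zero _)
  · exact Or.inr (zero_mul _)
  · exact Or.inr (zero_mul _)

lemma ZS_comm (z : M) : ∀ a ∈ ZS z, ∀ b ∈ ZS z, a * b = b * a := by
  rintro a (⟨i, rfl⟩ | rfl) b (⟨j, rfl⟩ | rfl)
  · rw [← pow_add, ← pow_add, Nat.add_comm]
  · rw [mul_zero, zero_mul]
  · rw [mul_zero, zero_mul]
  · rfl

lemma s_two (y : M) : s y 2 = wrd [y] * wrd [0] := by
  show e y * e 0 ^ (2 - 1) = _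
  rw [show (2:ℕ) - 1 = 1 from rfl, pow_one]
  rfl

lemma sprod_mem (z : M) (n : ℕ) : sprod z 2 n ∈ Wspan (ZS z) := by
  induction n with
  | zero => exact one_mem_Wspan _
  | succ n ih =>
    show s (z ^ (n+1)) 2 * sprod z 2 n ∈ _
    rw [s_two, mul_assoc]
    exact wmul_mem_Wspan (show z^(n+1) ∈ ZS z from Or.inl ⟨n+1, rfl⟩) (wmul_mem_Wspan (ZS_zero z) ih)

lemma Scoef_mem (z : M) (d : ℕ) : Scoef z d ∈ Wspan (ZS z) := by
  unfold Scoef; split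
  · exact sprod_mem z _
  · exact zero_mem _

lemma Ccoef_mem (z : M) (d : ℕ) : Ccoef z d ∈ Wspan (ZS z) :=
  Submodule.smul_mem _ _ (Scoef_mem z _)

lemma wz_mem (z : M) (n : ℕ) : wz z n ∈ Wspan (ZS z) :=
  Submodule.smul_mem _ _ (sprod_mem z _)

lemma Scoef_odd (z : M) (n : ℕ) : Scoef z (2*n+1) = sprod z 2 n := by
  unfold Scoef
  rw [if_pos (by omega)]
  congr 1
  omega

lemma Scoef_even (z : M) (n : ℕ) : Scoef z (2*n) = 0 := by
  unfold Scoef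
  rw [if_neg (by omega)]

lemma Ccoef_even (z : M) (n : ℕ) :
    Ccoef z (2*n) = ((2*n+1 : ℕ) : ℚ) • sprod z 2 n := by
  unfold Ccoef
  rw [Scoef_odd]
  congr 1
  push_cast
  ring

lemma Ccoef_odd (z : M) (n : ℕ) : Ccoef z (2*n+1) = 0 := by
  unfold Ccoef
  rw [show 2*n+1+1 = 2*(n+1) from by ring, Scoef_even, smul_zero]

lemma Ccoef_zero (z : M) : Ccoef z 0 = 1 := by
  have h := Ccoef_even z 0
  simpa [sprod] using h

lemma wz_one (z : M) : wz z 1 = (6 : ℚ) • sprod z 2 1 := by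
  unfold wz
  norm_num [Nat.factorial]

lemma hmul_sum_right {ι : Type*} (f : H M) (s : Finset ι) (g : ι → H M) :
    hmul f (∑ i ∈ s, g i) = ∑ i ∈ s, hmul f (g i) := by
  classical
  induction s using Finset.induction_on with
  | empty => simp [hmul_zero_right]
  | insert a s' h ih => rw [Finset.sum_insert h, Finset.sum_insert h,
      hmul_add_right, ih]

lemma Sder (z : M) (j : ℕ) : ((j+1 : ℕ) : ℚ) • Scoef z (j+1) = Ccoef z j := by
  unfold Ccoef
  congr 1
  push_cast
  ring

lemma sum_parity_split (F : ℕ → H M) (m : ℕ) :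
    ∑ i ∈ Finset.range (2*m), F i
      = ∑ a ∈ Finset.range m, F (2*a) + ∑ a ∈ Finset.range m, F (2*a+1) := by
  induction m with
  | zero => simp
  | succ m ih =>
    rw [show 2*(m+1) = (2*m+1)+1 from by ring, Finset.sum_range_succ, Finset.sum_range_succ,
      ih, Finset.sum_range_succ, Finset.sum_range_succ]
    abel

lemma leibniz (f g : ℕ → H M) (d : ℕ) :
    ((d+1 : ℕ) : ℚ) • hmulPS f g (d+1) =
      ∑ i ∈ Finset.range (d+1), hmul (((i+1:ℕ):ℚ) • f (i+1)) (g (d-i))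
      + ∑ i ∈ Finset.range (d+1), hmul (f i) (((d-i+1:ℕ):ℚ) • g (d-i+1)) := by
  unfold hmulPS
  rw [Finset.smul_sum]
  have hsplit : ∀ i ∈ Finset.range (d+1+1),
      ((d+1:ℕ):ℚ) • hmul (f i) (g (d+1-i))
        = ((i:ℕ):ℚ) • hmul (f i) (g (d+1-i)) + (((d+1-i : ℕ)):ℚ) • hmul (f i) (g (d+1-i)) := by
    intro i hi
    rw [← add_smul]
    congr 1
    rw [← Nat.cast_add]
    congr 1
    simp only [Finset.mem_range] at hi
    omega
  rw [Finset.sum_congr rfl hsplit, Finset.sum_add_distrib]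
  congr 1
  · rw [Finset.sum_range_succ']
    simp only [Nat.cast_zero, zero_smul, add_zero]
    apply Finset.sum_congr rfl
    intro i _
    rw [show d+1-(i+1) = d-i from by omega, hmul_smul_left]
  · rw [Finset.sum_range_succ]
    simp only [Nat.sub_self, Nat.cast_zero, zero_smul, add_zero]
    apply Finset.sum_congr rfl
    intro i hi
    simp only [Finset.mem_range] at hi
    rw [show d+1-i = d-i+1 from by omega, hmul_smul_right]

end Lemmas6

section Lemmas7
variable {M : Type*} [MonoidWithZero M]

/-- `T_d = (d+1)(d+2) S_{d+2} − w₁ ∗ S_d` (the coefficients of `S'' − w₁ ∗ S`). -/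
noncomputable def TT (z : M) (d : ℕ) : H M :=
  (((d+1)*(d+2) : ℕ) : ℚ) • Scoef z (d+2) - hmul (wz z 1) (Scoef z d)

/-- `(d+1)(d+2) C_{d+2} − w₁ ∗ C_d`. -/
noncomputable def TCc (z : M) (d : ℕ) : H M :=
  (((d+1)*(d+2) : ℕ) : ℚ) • Ccoef z (d+2) - hmul (wz z 1) (Ccoef z d)

/-- `(j+1) C_{j+1} − w₁ ∗ S_j` (the coefficients of `C' − w₁ ∗ S`). -/
noncomputable def DP (z : M) (j : ℕ) : H M :=
  ((j+1 : ℕ) : ℚ) • Ccoef z (j+1) - hmul (wz z 1) (Scoef z j)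

lemma TT_even (z : M) (m : ℕ) : TT z (2*m) = 0 := by
  unfold TT
  rw [show 2*m+2 = 2*(m+1) from by ring, Scoef_even, Scoef_even, smul_zero,
    hmul_zero_right, sub_zero]

lemma TT_odd_val (z : M) (m : ℕ) : TT z (2*m+1) =
    (((2*m+2)*(2*m+3) : ℕ) : ℚ) • sprod z 2 (m+1)
      - (6:ℚ) • hmul (sprod z 2 1) (sprod z 2 m) := by
  unfold TT
  rw [show 2*m+1+2 = 2*(m+1)+1 from by ring, Scoef_odd, Scoef_odd, wz_one, hmul_smul_left]
  try (match_scalars <;> (push_cast; ring))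

lemma TCc_odd (z : M) (m : ℕ) : TCc z (2*m+1) = 0 := by
  unfold TCc
  rw [show 2*m+1+2 = 2*(m+1)+1 from by ring, Ccoef_odd, Ccoef_odd, smul_zero,
    hmul_zero_right, sub_zero]

lemma TCc_even (z : M) (m : ℕ) : TCc z (2*m) = ((2*m+1 : ℕ) : ℚ) • TT z (2*m+1) := by
  unfold TCc
  rw [show 2*m+2 = 2*(m+1) from by ring, Ccoef_even, Ccoef_even, TT_odd_val,
    hmul_smul_right, wz_one, hmul_smul_left]
  match_scalars <;> (push_cast; ring)

lemma DP_even (z : M) (m : ℕ) : DP z (2*m) = 0 := by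
  unfold DP
  rw [show 2*m+1 = 2*m+1 from rfl, Ccoef_odd, Scoef_even, smul_zero, hmul_zero_right,
    sub_zero]

lemma DP_odd (z : M) (m : ℕ) : DP z (2*m+1) = TT z (2*m+1) := by
  unfold DP
  rw [show 2*m+1+1 = 2*(m+1) from by ring, Ccoef_even, Scoef_odd, TT_odd_val, wz_one,
    hmul_smul_left]
  match_scalars <;> (push_cast; ring)

lemma TT_one (z : M) : TT z 1 = 0 := by
  have h := TT_odd_val z 0
  rw [show sprod z 2 0 = 1 from rfl, hmul_one_right] at h
  rw [show (1:ℕ) = 2*0+1 from rfl, h]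
  match_scalars
  norm_num

lemma binom_helper (i j : ℕ) :
    (((j+1)*(j+2) : ℕ):ℚ) * (Nat.choose (i+j+2) i : ℚ)
      = (((i+j+1)*(i+j+2) : ℕ):ℚ) * (Nat.choose (i+j) i : ℚ) := by
  have h1 := Nat.choose_mul_succ_eq (i+j) i
  have h2 := Nat.choose_mul_succ_eq (i+j+1) i
  rw [show i+j+1-i = j+1 from by omega] at h1
  rw [show i+j+1+1-i = j+2 from by omega] at h2
  rw [show i+j+1+1 = i+j+2 from by omega] at h2
  have q1 : ((Nat.choose (i+j) i : ℚ)) * ((i:ℚ)+(j:ℚ)+1) = (Nat.choose (i+j+1) i : ℚ) * ((j:ℚ)+1) := by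
    exact_mod_cast h1
  have q2 : ((Nat.choose (i+j+1) i : ℚ)) * ((i:ℚ)+(j:ℚ)+2) = (Nat.choose (i+j+2) i : ℚ) * ((j:ℚ)+2) := by
    exact_mod_cast h2
  push_cast
  linear_combination (-((j:ℚ)+1)) * q2 - ((i:ℚ)+(j:ℚ)+2) * q1

end Lemmas7

section Lemmas8
variable {M : Type*} [MonoidWithZero M]

lemma hmul_comm_SC (z : M) {f g : H M} (hf : f ∈ Wspan (ZS z)) (hg : g ∈ Wspan (ZS z)) :
    hmul f g = hmul g f := hmul_comm_Wspan (ZS_comm z) hf hg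

lemma Pder (z : M) (d : ℕ) :
    ((d+1 : ℕ) : ℚ) • Pcoef z (d+1)
      = (2:ℚ) • ∑ i ∈ Finset.range (d+1), hmul (Ccoef z i) (DP z (d-i)) := by
  have hSS : ((d+1:ℕ):ℚ) • hmulPS (Scoef z) (Scoef z) (d+1)
      = (2:ℚ) • ∑ i ∈ Finset.range (d+1), hmul (Scoef z i) (Ccoef z (d-i)) := by
    rw [leibniz]
    have e1 : ∑ i ∈ Finset.range (d+1), hmul (((i+1:ℕ):ℚ) • Scoef z (i+1)) (Scoef z (d-i))
        = ∑ i ∈ Finset.range (d+1), hmul (Scoef z i) (Ccoef z (d-i)) := by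
      rw [← Finset.sum_range_reflect]
      apply Finset.sum_congr rfl
      intro i hi
      simp only [Finset.mem_range] at hi
      rw [show d+1-1-i = d-i from by omega, show d-(d-i) = i from by omega, Sder]
      exact hmul_comm_SC z (Ccoef_mem z _) (Scoef_mem z _)
    have e2 : ∑ i ∈ Finset.range (d+1), hmul (Scoef z i) (((d-i+1:ℕ):ℚ) • Scoef z (d-i+1))
        = ∑ i ∈ Finset.range (d+1), hmul (Scoef z i) (Ccoef z (d-i)) :=
      Finset.sum_congr rfl (fun i _ => by rw [Sder])
    rw [e1, e2, two_smul]
  have hCC : ((d+1:ℕ):ℚ) • hmulPS (Ccoef z) (Ccoef z) (d+1)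
      = (2:ℚ) • ∑ i ∈ Finset.range (d+1), hmul (Ccoef z i) (((d-i+1:ℕ):ℚ) • Ccoef z (d-i+1)) := by
    rw [leibniz]
    have e1 : ∑ i ∈ Finset.range (d+1), hmul (((i+1:ℕ):ℚ) • Ccoef z (i+1)) (Ccoef z (d-i))
        = ∑ i ∈ Finset.range (d+1), hmul (Ccoef z i) (((d-i+1:ℕ):ℚ) • Ccoef z (d-i+1)) := by
      rw [← Finset.sum_range_reflect]
      apply Finset.sum_congr rfl
      intro i hi
      simp only [Finset.mem_range] at hi
      rw [show d+1-1-i = d-i from by omega, show d-(d-i) = i from by omega,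
        hmul_smul_left, hmul_smul_right,
        hmul_comm_SC z (Ccoef_mem z _) (Ccoef_mem z _)]
    rw [e1, two_smul]
  unfold Pcoef
  rw [smul_add, smul_neg, ← hmul_smul_right, hSS, hCC]
  rw [hmul_smul_right, hmul_sum_right]
  have e4 : ∑ i ∈ Finset.range (d+1), hmul (wz z 1) (hmul (Scoef z i) (Ccoef z (d-i)))
      = ∑ i ∈ Finset.range (d+1), hmul (Ccoef z i) (hmul (wz z 1) (Scoef z (d-i))) := by
    rw [← Finset.sum_range_reflect]
    apply Finset.sum_congr rfl
    intro i hi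
    simp only [Finset.mem_range] at hi
    rw [show d+1-1-i = d-i from by omega, show d-(d-i) = i from by omega]
    rw [hmul_comm_SC z (Scoef_mem z _) (Ccoef_mem z _)]
    exact hmul_exchange (ZS_comm z) (wz_mem z 1) (Ccoef_mem z _) _
  rw [e4]
  have e5 : ∑ i ∈ Finset.range (d+1), hmul (Ccoef z i) (DP z (d-i))
      = ∑ i ∈ Finset.range (d+1), hmul (Ccoef z i) (((d-i+1:ℕ):ℚ) • Ccoef z (d-i+1))
        - ∑ i ∈ Finset.range (d+1), hmul (Ccoef z i) (hmul (wz z 1) (Scoef z (d-i))) := by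
    rw [← Finset.sum_sub_distrib]
    apply Finset.sum_congr rfl
    intro i _
    rw [← hmul_sub_right]
    rfl
  rw [e5, smul_sub]
  abel

end Lemmas8

section Lemmas9
variable {M : Type*} [MonoidWithZero M]

lemma Scoef_zero (z : M) : Scoef z 0 = 0 := by
  have := Scoef_even z 0; simpa using this

lemma Scoef_one (z : M) : Scoef z 1 = 1 := by
  have := Scoef_odd z 0; simpa [sprod] using this

lemma Ccoef_one (z : M) : Ccoef z 1 = 0 := by
  have := Ccoef_odd z 0; simpa using this

lemma A0 (z : M) (i : ℕ) : Acoef z i 0 = 0 := by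
  unfold Acoef
  rw [Nat.add_zero, Nat.choose_self, Ccoef_zero, hmul_one_right, Scoef_zero,
    hmul_zero_right, Nat.cast_one, one_smul, sub_self, zero_sub, neg_zero]

lemma A1 (z : M) (i : ℕ) : Acoef z i 1 = 0 := by
  unfold Acoef
  rw [Nat.choose_succ_self_right, Ccoef_one, hmul_zero_right, Scoef_one, hmul_one_right,
    sub_zero]
  unfold Ccoef
  rw [sub_eq_zero]
  congr 1
  push_cast
  ring

lemma Xdecomp (z : M) (i j : ℕ) :
    (((j+1)*(j+2) : ℕ) : ℚ) • Acoef z i (j+2) - hmul (wz z 1) (Acoef z i j)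
      = (Nat.choose (i+j) i : ℚ) • TT z (i+j)
        - hmul (Scoef z i) (TCc z j) - hmul (Ccoef z i) (TT z j) := by
  have ex1 : hmul (wz z 1) (hmul (Scoef z i) (Ccoef z j))
      = hmul (Scoef z i) (hmul (wz z 1) (Ccoef z j)) :=
    hmul_exchange (ZS_comm z) (wz_mem z 1) (Scoef_mem z i) _
  have ex2 : hmul (wz z 1) (hmul (Ccoef z i) (Scoef z j))
      = hmul (Ccoef z i) (hmul (wz z 1) (Scoef z j)) :=
    hmul_exchange (ZS_comm z) (wz_mem z 1) (Ccoef_mem z i) _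
  unfold Acoef TT TCc
  rw [show i+(j+2) = (i+j)+2 from by ring]
  simp only [hmul_sub_right, hmul_smul_right, smul_sub, smul_smul, ex1, ex2]
  have hb : (((j+1)*(j+2) : ℕ) : ℚ) * (Nat.choose (i+j+2) i : ℚ)
      = (Nat.choose (i+j) i : ℚ) * ((((i+j+1)*(i+j+2) : ℕ)):ℚ) := by
    rw [binom_helper]; push_cast; ring
  rw [hb]
  abel

end Lemmas9

section Lemmas10
variable {M : Type*} [MonoidWithZero M]
variable (z : M) (I : Submodule ℚ (H M))

lemma A_to_T (hA : ∀ i j : ℕ, Acoef z i j ∈ I) : ∀ m : ℕ, TT z (2*m+1) ∈ I := by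
  intro m
  have hx := Xdecomp z (2*m+1) 0
  rw [A0, hmul_zero_right, sub_zero] at hx
  have hTC0 : TCc z 0 = 0 := by
    have := TCc_even z 0
    simpa [TT_one] using this
  rw [hTC0, hmul_zero_right, sub_zero] at hx
  have hTT0 : TT z 0 = 0 := by
    have := TT_even z 0; simpa using this
  rw [hTT0, hmul_zero_right, sub_zero, Nat.add_zero, Nat.choose_self, Nat.cast_one,
    one_smul] at hx
  rw [← hx]
  exact Submodule.smul_mem _ _ (hA _ _)

lemma T_to_A (hI : ∀ a b : H M, b ∈ I → hmul a b ∈ I) (hT : ∀ m : ℕ, TT z (2*m+1) ∈ I) : ∀ i j : ℕ, Acoef z i j ∈ I := by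
  have hTT : ∀ d : ℕ, TT z d ∈ I := by
    intro d
    rcases Nat.even_or_odd d with ⟨m, hm⟩ | ⟨m, hm⟩
    · rw [show d = 2*m from by omega, TT_even]; exact zero_mem _
    · rw [show d = 2*m+1 from by omega]; exact hT m
  have hTC : ∀ d : ℕ, TCc z d ∈ I := by
    intro d
    rcases Nat.even_or_odd d with ⟨m, hm⟩ | ⟨m, hm⟩
    · rw [show d = 2*m from by omega, TCc_even]
      exact Submodule.smul_mem _ _ (hT m)
    · rw [show d = 2*m+1 from by omega, TCc_odd]; exact zero_mem _
  intro i j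
  induction j using Nat.strong_induction_on with
  | _ j IH =>
  match j with
  | 0 => rw [A0]; exact zero_mem _
  | 1 => rw [A1]; exact zero_mem _
  | (j+2) =>
    have hx := Xdecomp z i j
    rw [sub_eq_iff_eq_add] at hx
    have hmem : (((j+1)*(j+2):ℕ):ℚ) • Acoef z i (j+2) ∈ I := by
      rw [hx]
      exact add_mem (sub_mem (sub_mem (Submodule.smul_mem _ _ (hTT _)) (hI _ _ (hTC _)))
        (hI _ _ (hTT _))) (hI _ _ (IH j (by omega)))
    have hne : (((j+1)*(j+2):ℕ):ℚ) ≠ 0 := by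
      rw [Nat.cast_ne_zero]; positivity
    have := Submodule.smul_mem I ((((j+1)*(j+2):ℕ):ℚ))⁻¹ hmem
    rwa [inv_smul_smul₀ hne] at this

lemma T_to_P (hI : ∀ a b : H M, b ∈ I → hmul a b ∈ I) (hT : ∀ m : ℕ, TT z (2*m+1) ∈ I) :
    ∀ d : ℕ, Pcoef z d - (if d = 0 then (1 : H M) else 0) ∈ I := by
  intro d
  match d with
  | 0 =>
    rw [if_pos rfl]
    have hP0 : Pcoef z 0 = 1 := by
      unfold Pcoef hmulPS
      rw [Finset.sum_range_one, Finset.sum_range_one]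
      rw [Nat.sub_zero, Scoef_zero, Ccoef_zero, hmul_zero_right, hmul_zero_right,
        hmul_one_left, neg_zero, zero_add]
    rw [hP0, sub_self]; exact zero_mem _
  | (d+1) =>
    rw [if_neg (Nat.succ_ne_zero d), sub_zero]
    have hmem : ((d+1:ℕ):ℚ) • Pcoef z (d+1) ∈ I := by
      rw [Pder]
      apply Submodule.smul_mem
      apply Submodule.sum_mem
      intro i _
      rcases Nat.even_or_odd (d - i) with ⟨m, hm⟩ | ⟨m, hm⟩
      · rw [show d-i = 2*m from by omega, DP_even, hmul_zero_right]; exact zero_mem _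
      · rw [show d-i = 2*m+1 from by omega, DP_odd]; exact hI _ _ (hT m)
    have hne : ((d+1:ℕ):ℚ) ≠ 0 := by
      rw [Nat.cast_ne_zero]; omega
    have := Submodule.smul_mem I (((d+1:ℕ):ℚ))⁻¹ hmem
    rwa [inv_smul_smul₀ hne] at this

lemma P_to_T (hI : ∀ a b : H M, b ∈ I → hmul a b ∈ I) (hP : ∀ d : ℕ, Pcoef z d - (if d = 0 then (1 : H M) else 0) ∈ I) :
    ∀ m : ℕ, TT z (2*m+1) ∈ I := by
  intro m
  induction m using Nat.strong_induction_on with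
  | _ m IH =>
  have hp : ((2*m+1+1:ℕ):ℚ) • Pcoef z (2*m+1+1) ∈ I := by
    have h := hP (2*m+1+1)
    rw [if_neg (by omega), sub_zero] at h
    exact Submodule.smul_mem _ _ h
  rw [Pder] at hp
  have hsum : ∑ i ∈ Finset.range (2*m+1+1), hmul (Ccoef z i) (DP z (2*m+1-i))
      = TT z (2*m+1)
        + ∑ a ∈ Finset.range m, hmul (Ccoef z (2*(a+1))) (TT z (2*(m-(a+1))+1)) := by
    rw [show 2*m+1+1 = 2*(m+1) from by ring, sum_parity_split]
    have hodd : ∑ a ∈ Finset.range (m+1), hmul (Ccoef z (2*a+1)) (DP z (2*m+1-(2*a+1))) = 0 :=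
      Finset.sum_eq_zero (fun a _ => by rw [Ccoef_odd, hmul_zero_left])
    rw [hodd, add_zero]
    have heven : ∀ a ∈ Finset.range (m+1),
        hmul (Ccoef z (2*a)) (DP z (2*m+1-2*a)) = hmul (Ccoef z (2*a)) (TT z (2*(m-a)+1)) := by
      intro a ha
      simp only [Finset.mem_range] at ha
      rw [show 2*m+1-2*a = 2*(m-a)+1 from by omega, DP_odd]
    rw [Finset.sum_congr rfl heven, Finset.sum_range_succ']
    rw [show 2*(0:ℕ) = 0 from rfl, Ccoef_zero, hmul_one_left, Nat.sub_zero]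
    rw [add_comm]
  rw [hsum] at hp
  have hrest : ∑ a ∈ Finset.range m, hmul (Ccoef z (2*(a+1))) (TT z (2*(m-(a+1))+1)) ∈ I :=
    Submodule.sum_mem _ (fun a ha => hI _ _ (IH (m-(a+1))
      (by simp only [Finset.mem_range] at ha; omega)))
  have h2 := sub_mem (Submodule.smul_mem I (2:ℚ)⁻¹ hp) hrest
  rwa [inv_smul_smul₀ (by norm_num : (2:ℚ) ≠ 0), add_sub_cancel_right] at h2

end Lemmas10


/-- For any ideal `I` of `𝔥_{M,∗}`, the modified addition formula holds in
`(𝔥_{M,∗}/I)⟦x,y⟧` iff the modified Pythagorean identity holds in `(𝔥_{M,∗}/I)⟦x⟧`. -/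
theorem addition_iff_pythagorean (M : Type*) [MonoidWithZero M] (z : M)
    (I : Submodule ℚ (H M)) (hI : ∀ a b : H M, b ∈ I → hmul a b ∈ I) :
    (∀ i j : ℕ, Acoef z i j ∈ I) ↔
      (∀ d : ℕ, Pcoef z d - (if d = 0 then (1 : H M) else 0) ∈ I) := by
  constructor
  · intro hA
    exact T_to_P z I hI (A_to_T z I hA)
  · intro hP
    exact T_to_A z I hI (P_to_T z I hI hP)
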